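/- With Ξ_j as above (j ∈ ℤ_s) and Ξ_ε := Ξ_{ε_n} ⋯ Ξ_{ε_1} for ε ∈ ℤ_s^n, one has Ξ_ε^{-1} = [[σ₁^{-n} I, σ₂^{-n} p_ε(σ₂/σ₁)],[0, σ₂^{-n}]] where p_ε(x) = (1−x) ∑_{k=1}^n x^{k−1} e_{ε_k}, and equivalently Ξ_ε = [[σ₁^n I, −σ₁^n p_ε(σ₂/σ₁)],[0, σ₂^n]]. -/
import Mathlib


/-! Codimension-1 shears and anisotropic dilations in dimension `s = m + 1`.
The index set for the digits is `Fin (m+1) = ℤ_s`; the digit `0` corresponds to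
`e₀ = 0` (no shear), and the digit `j+1` corresponds to the canonical unit
vector `e_{j+1}` of `ℝ^{s-1} = ℝ^m`, which has its `1` in position `j`. -/

/-- The vector `e_j ∈ ℝ^{s-1}` (`e₀ = 0`). -/
def unitE (m : ℕ) (j : Fin (m + 1)) : Fin m → ℝ :=
  fun i => if (i : ℕ) + 1 = (j : ℕ) then 1 else 0

/-- The shear `Γ_j = [[I_{s−1}, −e_j],[0,1]]` (so `Γ₀ = I`). -/
def shearGamma (m : ℕ) (j : Fin (m + 1)) :
    Matrix (Fin (m + 1)) (Fin (m + 1)) ℝ :=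
  fun i k =>
    if (i : ℕ) < m then
      if (k : ℕ) < m then (if i = k then 1 else 0)
      else -(if (i : ℕ) + 1 = (j : ℕ) then 1 else 0)
    else (if k = i then 1 else 0)

/-- The diagonal dilation `Ξ₀ = diag(σ₁ I_{s-1}, σ₂)`. -/
def xiZero (m : ℕ) (σ₁ σ₂ : ℝ) : Matrix (Fin (m + 1)) (Fin (m + 1)) ℝ :=
  Matrix.diagonal (fun i => if (i : ℕ) < m then σ₁ else σ₂)

/-- The sheared dilation `Ξ_j = [[σ₁ I_{s−1}, (σ₂ − σ₁)e_j],[0, σ₂]]`. -/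
def xiMat (m : ℕ) (σ₁ σ₂ : ℝ) (j : Fin (m + 1)) :
    Matrix (Fin (m + 1)) (Fin (m + 1)) ℝ :=
  fun i k =>
    if (i : ℕ) < m then
      if (k : ℕ) < m then (if i = k then σ₁ else 0)
      else (σ₂ - σ₁) * (if (i : ℕ) + 1 = (j : ℕ) then 1 else 0)
    else (if k = i then σ₂ else 0)

/-- `[[σ₁^{-1} I_{s−1}, ((σ₁−σ₂)/(σ₁σ₂)) e_j],[0, σ₂^{-1}]]`, the claimed
inverse of `Ξ_j`. -/
noncomputable def xiInvMat (m : ℕ) (σ₁ σ₂ : ℝ) (j : Fin (m + 1)) :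
    Matrix (Fin (m + 1)) (Fin (m + 1)) ℝ :=
  fun i k =>
    if (i : ℕ) < m then
      if (k : ℕ) < m then (if i = k then σ₁⁻¹ else 0)
      else ((σ₁ - σ₂) / (σ₁ * σ₂)) * (if (i : ℕ) + 1 = (j : ℕ) then 1 else 0)
    else (if k = i then σ₂⁻¹ else 0)

/-- The product `Ξ_ε = Ξ_{ε_n} ⋯ Ξ_{ε_1}` for a digit sequence `ε ∈ ℤ_s^n`
(here `ε t` corresponds to `ε_{t+1}`, so the factor for `ε 0` is applied first,
i.e. stands rightmost). -/
noncomputable def xiProd (m : ℕ) (σ₁ σ₂ : ℝ) {n : ℕ} (ε : Fin n → Fin (m + 1)) :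
    Matrix (Fin (m + 1)) (Fin (m + 1)) ℝ :=
  ((List.ofFn fun t => xiMat m σ₁ σ₂ (ε t)).reverse).prod

/-- The vector `p_ε(x) = (1−x) ∑_{k=1}^n x^{k−1} e_{ε_k}`, evaluated at
`x = σ₂/σ₁`. -/
noncomputable def pEps (m : ℕ) (σ₁ σ₂ : ℝ) {n : ℕ} (ε : Fin n → Fin (m + 1)) :
    Fin m → ℝ :=
  fun i => (1 - σ₂ / σ₁) *
    ∑ t : Fin n, (σ₂ / σ₁) ^ (t : ℕ) * (if (i : ℕ) + 1 = (ε t : ℕ) then 1 else 0)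

/-- The explicit form `[[σ₁^n I, −σ₁^n p_ε(σ₂/σ₁)],[0, σ₂^n]]` of `Ξ_ε`. -/
noncomputable def xiEpsMat (m : ℕ) (σ₁ σ₂ : ℝ) {n : ℕ} (ε : Fin n → Fin (m + 1)) :
    Matrix (Fin (m + 1)) (Fin (m + 1)) ℝ :=
  fun i k =>
    if hi : (i : ℕ) < m then
      if (k : ℕ) < m then (if i = k then σ₁ ^ n else 0)
      else -σ₁ ^ n * pEps m σ₁ σ₂ ε ⟨i, hi⟩
    else (if k = i then σ₂ ^ n else 0)

/-- The explicit form `[[σ₁^{-n} I, σ₂^{-n} p_ε(σ₂/σ₁)],[0, σ₂^{-n}]]` of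
`Ξ_ε^{-1}`. -/
noncomputable def xiEpsInvMat (m : ℕ) (σ₁ σ₂ : ℝ) {n : ℕ}
    (ε : Fin n → Fin (m + 1)) : Matrix (Fin (m + 1)) (Fin (m + 1)) ℝ :=
  fun i k =>
    if hi : (i : ℕ) < m then
      if (k : ℕ) < m then (if i = k then (σ₁⁻¹) ^ n else 0)
      else (σ₂⁻¹) ^ n * pEps m σ₁ σ₂ ε ⟨i, hi⟩
    else (if k = i then (σ₂⁻¹) ^ n else 0)

/-- Explicit formula for `Ξ_ε = Ξ_{ε_n} ⋯ Ξ_{ε_1}` and its inverse: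
`Ξ_ε^{-1} = [[σ₁^{-n} I, σ₂^{-n} p_ε(σ₂/σ₁)],[0, σ₂^{-n}]]` with
`p_ε(x) = (1−x) ∑_{k=1}^n x^{k−1} e_{ε_k}`, and
`Ξ_ε = [[σ₁^n I, −σ₁^n p_ε(σ₂/σ₁)],[0, σ₂^n]]`. -/
def UT (m : ℕ) (a : ℝ) (b : Fin m → ℝ) (d : ℝ) :
    Matrix (Fin (m + 1)) (Fin (m + 1)) ℝ :=
  fun i k =>
    if hi : (i : ℕ) < m then
      if (k : ℕ) < m then (if i = k then a else 0)
      else b ⟨i, hi⟩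
    else (if k = i then d else 0)

lemma UT_mul (m : ℕ) (a d a' d' : ℝ) (b b' : Fin m → ℝ) :
    UT m a b d * UT m a' b' d' =
      UT m (a * a') (fun i => a * b' i + b i * d') (d * d') := by
  ext i k
  rw [Matrix.mul_apply, Fin.sum_univ_castSucc]
  by_cases hi : (i : ℕ) < m
  · have hlast : ¬ ((Fin.last m : Fin (m+1)) : ℕ) < m := by simp
    by_cases hk : (k : ℕ) < m
    · have hkl : ¬ k = Fin.last m := by
        intro h; rw [h] at hk; exact hlast hk
      have hsum : ∀ l : Fin m,
          UT m a b d i l.castSucc * UT m a' b' d' l.castSucc k =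
          if l = ⟨i, hi⟩ then (if (⟨i,hi⟩ : Fin m) = ⟨k, hk⟩ then a * a' else 0) else 0 := by
        intro l
        simp only [UT, Fin.coe_castSucc, Fin.is_lt, dif_pos, if_pos, hi, hk]
        rcases eq_or_ne l (⟨i, hi⟩ : Fin m) with h | h
        · subst h
          simp [Fin.ext_iff]
        · have h1 : ¬ i = l.castSucc := by
            intro hh; apply h; apply Fin.ext; simpa [Fin.ext_iff] using hh.symm
          simp [h1, h]
      rw [Finset.sum_congr rfl (fun l _ => hsum l), Finset.sum_ite_eq']
      simp only [UT, hi, hk, dif_pos, hlast, dite_eq_ite, if_neg hlast, if_neg hkl,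
        Finset.mem_univ, if_pos, mul_zero, add_zero, dif_neg hlast]
      simp [Fin.ext_iff]
    · have hkl : k = Fin.last m := Fin.ext (by have := k.isLt; simp; omega)
      have hsum : ∀ l : Fin m,
          UT m a b d i l.castSucc * UT m a' b' d' l.castSucc k =
          if l = ⟨i, hi⟩ then a * b' ⟨i, hi⟩ else 0 := by
        intro l
        simp only [UT, Fin.coe_castSucc, Fin.is_lt, dif_pos, hi, if_pos, if_neg hk]
        rcases eq_or_ne l (⟨i, hi⟩ : Fin m) with h | h
        · subst h; simp [Fin.ext_iff]
        · have h1 : ¬ i = l.castSucc := by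
            intro hh; apply h; apply Fin.ext; simpa [Fin.ext_iff] using hh.symm
          simp [h1, h]
      rw [Finset.sum_congr rfl (fun l _ => hsum l), Finset.sum_ite_eq']
      simp [UT, hi, hk, hlast, hkl]
  · have hil : i = Fin.last m := Fin.ext (by have := i.isLt; simp; omega)
    have hlast : ¬ ((Fin.last m : Fin (m+1)) : ℕ) < m := by simp
    have hsum : ∀ l : Fin m,
        UT m a b d i l.castSucc * UT m a' b' d' l.castSucc k = 0 := by
      intro l
      have h1 : ¬ (l.castSucc = i) := by
        intro hh; rw [← hh] at hi; exact hi l.isLt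
      simp [UT, hi, h1]
    rw [Finset.sum_congr rfl (fun l _ => hsum l), Finset.sum_const_zero, zero_add]
    subst hil
    by_cases hk : (k : ℕ) < m
    · have hkl : ¬ k = Fin.last m := by
        intro h; rw [h] at hk; exact hlast hk
      simp [UT, hi, hk, hlast, hkl]
    · have hkl : k = Fin.last m := Fin.ext (by have := k.isLt; simp; omega)
      subst hkl
      simp [UT, hlast]

lemma UT_congr (m : ℕ) {a a' d d' : ℝ} {b b' : Fin m → ℝ}
    (ha : a = a') (hb : ∀ i, b i = b' i) (hd : d = d') :
    UT m a b d = UT m a' b' d' := by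
  subst ha; subst hd
  have : b = b' := funext hb
  rw [this]

lemma one_eq_UT (m : ℕ) : (1 : Matrix (Fin (m+1)) (Fin (m+1)) ℝ) = UT m 1 (fun _ => 0) 1 := by
  ext i k
  by_cases hi : (i : ℕ) < m
  · by_cases hk : (k : ℕ) < m
    · simp [UT, hi, hk, Matrix.one_apply]
    · have : ¬ i = k := by intro h; subst h; exact hk hi
      simp [UT, hi, hk, Matrix.one_apply, this]
  · have hil : (i : ℕ) = m := by have := i.isLt; omega
    by_cases hk : (k : ℕ) < m
    · have : ¬ i = k := by intro h; subst h; exact hi hk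
      have h2 : ¬ k = i := fun h => this h.symm
      simp [UT, hi, hk, Matrix.one_apply, this, h2]
    · have hkl : (k : ℕ) = m := by have := k.isLt; omega
      have : i = k := Fin.ext (by omega)
      subst this
      simp [UT, hi, Matrix.one_apply]

lemma xiMat_eq_UT (m : ℕ) (σ₁ σ₂ : ℝ) (j : Fin (m+1)) :
    xiMat m σ₁ σ₂ j = UT m σ₁ (fun i => (σ₂ - σ₁) * (if (i : ℕ) + 1 = (j : ℕ) then 1 else 0)) σ₂ := by
  ext i k
  by_cases hi : (i : ℕ) < m <;> simp [xiMat, UT, hi]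

lemma xiEpsMat_eq_UT (m : ℕ) (σ₁ σ₂ : ℝ) {n : ℕ} (ε : Fin n → Fin (m+1)) :
    xiEpsMat m σ₁ σ₂ ε = UT m (σ₁ ^ n) (fun i => -σ₁ ^ n * pEps m σ₁ σ₂ ε i) (σ₂ ^ n) := rfl

lemma xiEpsInvMat_eq_UT (m : ℕ) (σ₁ σ₂ : ℝ) {n : ℕ} (ε : Fin n → Fin (m+1)) :
    xiEpsInvMat m σ₁ σ₂ ε = UT m ((σ₁⁻¹) ^ n) (fun i => (σ₂⁻¹) ^ n * pEps m σ₁ σ₂ ε i) ((σ₂⁻¹) ^ n) := rfl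

lemma xiProd_succ (m : ℕ) (σ₁ σ₂ : ℝ) {n : ℕ} (ε : Fin (n+1) → Fin (m+1)) :
    xiProd m σ₁ σ₂ ε = xiProd m σ₁ σ₂ (fun t => ε t.succ) * xiMat m σ₁ σ₂ (ε 0) := by
  unfold xiProd
  rw [List.ofFn_succ, List.reverse_cons, List.prod_append, List.prod_singleton]

lemma pEps_succ (m : ℕ) (σ₁ σ₂ : ℝ) {n : ℕ} (ε : Fin (n+1) → Fin (m+1)) (i : Fin m) :
    pEps m σ₁ σ₂ ε i = (1 - σ₂/σ₁) * (if (i : ℕ) + 1 = (ε 0 : ℕ) then 1 else 0)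
      + (σ₂/σ₁) * pEps m σ₁ σ₂ (fun t => ε t.succ) i := by
  unfold pEps
  rw [Fin.sum_univ_succ, mul_add]
  congr 1
  · simp
  · rw [Finset.mul_sum, Finset.mul_sum, Finset.mul_sum]
    apply Finset.sum_congr rfl
    intro t _
    rw [Fin.val_succ]
    ring

lemma xiProd_eq (m : ℕ) (σ₁ σ₂ : ℝ) (hσ₁ : σ₁ ≠ 0) {n : ℕ} (ε : Fin n → Fin (m+1)) :
    xiProd m σ₁ σ₂ ε = xiEpsMat m σ₁ σ₂ ε := by
  induction n with
  | zero =>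
    rw [xiEpsMat_eq_UT]
    have : xiProd m σ₁ σ₂ ε = 1 := by
      unfold xiProd
      simp
    rw [this, one_eq_UT]
    exact UT_congr m (by simp) (fun i => by simp [pEps]) (by simp)
  | succ n ih =>
    rw [xiProd_succ, ih, xiEpsMat_eq_UT, xiMat_eq_UT, UT_mul, xiEpsMat_eq_UT]
    refine UT_congr m (by ring) (fun i => ?_) (by ring)
    rw [pEps_succ]
    by_cases he : (i : ℕ) + 1 = ((ε 0 : Fin (m+1)) : ℕ) <;>
      simp only [he, if_true, if_false] <;> field_simp <;> ring

theorem xiProd_explicit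
    (m : ℕ) (hm : 1 ≤ m) (σ₁ σ₂ : ℤ) (h₁ : σ₂ < σ₁) (h₂ : 1 < σ₂)
    (n : ℕ) (ε : Fin n → Fin (m + 1)) :
    xiProd m (σ₁ : ℝ) (σ₂ : ℝ) ε = xiEpsMat m (σ₁ : ℝ) (σ₂ : ℝ) ε ∧
    (xiProd m (σ₁ : ℝ) (σ₂ : ℝ) ε)⁻¹ = xiEpsInvMat m (σ₁ : ℝ) (σ₂ : ℝ) ε := by
  have hσ₂ : (σ₂ : ℝ) ≠ 0 := by
    have : (1:ℝ) < (σ₂ : ℝ) := by exact_mod_cast h₂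
    linarith
  have hσ₁ : (σ₁ : ℝ) ≠ 0 := by
    have : (σ₂ : ℝ) < (σ₁ : ℝ) := by exact_mod_cast h₁
    have h1 : (1:ℝ) < (σ₂ : ℝ) := by exact_mod_cast h₂
    linarith
  have hmain := xiProd_eq m (σ₁:ℝ) (σ₂:ℝ) hσ₁ ε
  refine ⟨hmain, ?_⟩
  rw [hmain]
  apply Matrix.inv_eq_right_inv
  rw [xiEpsMat_eq_UT, xiEpsInvMat_eq_UT, UT_mul, one_eq_UT]
  refine UT_congr m ?_ (fun i => by ring) ?_
  · rw [← mul_pow, mul_inv_cancel₀ hσ₁, one_pow]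
  · rw [← mul_pow, mul_inv_cancel₀ hσ₂, one_pow]
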